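/- For Pair Matching, no fixed priority algorithm reading fewer than (1 − H(ε))n/2 advice bits can make fewer than εn mistakes, for any ε ∈ (0, 1/2] and large enough n. Formally: for every injective priority function P : ℚ → ℝ, every ε ∈ (0, 1/2], every b ∈ ℕ, and every decision map D : Fin (2^b) → List ℚ → ℚ → Bool, for all sufficiently large m, if b < (1 − H(ε))m then there exists a Pair Matching input of length N ≤ 2m (pairwise distinct rationals in [0,1]) such that, when the items are presented in decreasing order of P, for every advice value a ∈ Fin (2^b) the number of incorrect answers of D under advice a is at least εm (hence at least εN/2). -/

import Mathlib

/-- The binary entropy function `H(p) = −p·log₂ p − (1−p)·log₂(1−p)`. -/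
noncomputable def binEnt (p : ℝ) : ℝ :=
  -(p * Real.logb 2 p) - (1 - p) * Real.logb 2 (1 - p)

/-- The correct answer for item `i` of a Pair Matching input: `true` ('accept')
iff some other item of the input has matching value `1 − xᵢ`. -/
def pmCorrect (l : List ℚ) (i : Fin l.length) : Bool :=
  decide (∃ j : Fin l.length, j ≠ i ∧ l.get i + l.get j = 1)

namespace PMAux

/-! ### The pair values -/

def uu (m : ℕ) (i : Fin m) : ℚ := 1 / (((i : ℕ) : ℚ) + 3)

def vv (m : ℕ) (i : Fin m) : ℚ := 1 - uu m i

lemma uu_pos (m : ℕ) (i : Fin m) : 0 < uu m i := by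
  have : (0:ℚ) < ((i:ℕ):ℚ) + 3 := by positivity
  exact div_pos one_pos this

lemma uu_lt_half (m : ℕ) (i : Fin m) : uu m i < 1/2 := by
  have h : (0:ℚ) < ((i:ℕ):ℚ) + 3 := by positivity
  rw [uu, div_lt_div_iff₀ h (by norm_num : (0:ℚ) < 2)]
  have : (0:ℚ) ≤ ((i:ℕ):ℚ) := Nat.cast_nonneg _
  linarith

lemma half_lt_vv (m : ℕ) (i : Fin m) : 1/2 < vv m i := by
  have := uu_lt_half m i; rw [vv]; linarith

lemma vv_lt_one (m : ℕ) (i : Fin m) : vv m i < 1 := by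
  have := uu_pos m i; rw [vv]; linarith

lemma uu_inj (m : ℕ) {i j : Fin m} (h : uu m i = uu m j) : i = j := by
  rw [uu, uu] at h
  have hi : (0:ℚ) < ((i:ℕ):ℚ) + 3 := by positivity
  have hj : (0:ℚ) < ((j:ℕ):ℚ) + 3 := by positivity
  rw [div_eq_div_iff hi.ne' hj.ne'] at h
  have h2 : ((i:ℕ):ℚ) = ((j:ℕ):ℚ) := by linarith
  exact Fin.ext (Nat.cast_injective h2)

lemma vv_inj (m : ℕ) {i j : Fin m} (h : vv m i = vv m j) : i = j := by
  apply uu_inj m; rw [vv, vv] at h; linarith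

lemma uu_ne_vv (m : ℕ) (i j : Fin m) : uu m i ≠ vv m j :=
  ne_of_lt (lt_trans (uu_lt_half m i) (half_lt_vv m j))

/-! ### First/second item of each pair by priority -/

noncomputable def ff (P : ℚ → ℝ) (m : ℕ) (i : Fin m) : ℚ :=
  if P (vv m i) < P (uu m i) then uu m i else vv m i

noncomputable def ss (P : ℚ → ℝ) (m : ℕ) (i : Fin m) : ℚ :=
  if P (vv m i) < P (uu m i) then vv m i else uu m i

lemma ff_add_ss (P : ℚ → ℝ) (m : ℕ) (i : Fin m) : ff P m i + ss P m i = 1 := by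
  rw [ff, ss]; split <;> (rw [vv]; ring)

lemma ss_eq (P : ℚ → ℝ) (m : ℕ) (i : Fin m) : ss P m i = 1 - ff P m i := by
  have := ff_add_ss P m i; linarith

lemma ff_cases (P : ℚ → ℝ) (m : ℕ) (i : Fin m) : ff P m i = uu m i ∨ ff P m i = vv m i := by
  rw [ff]; split <;> simp

lemma ss_cases (P : ℚ → ℝ) (m : ℕ) (i : Fin m) : ss P m i = uu m i ∨ ss P m i = vv m i := by
  rw [ss]; split <;> simp

lemma ff_pos (P : ℚ → ℝ) (m : ℕ) (i : Fin m) : 0 < ff P m i := by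
  rcases ff_cases P m i with h | h <;> rw [h]
  · exact uu_pos m i
  · linarith [half_lt_vv m i]

lemma ff_lt_one (P : ℚ → ℝ) (m : ℕ) (i : Fin m) : ff P m i < 1 := by
  rcases ff_cases P m i with h | h <;> rw [h]
  · linarith [uu_lt_half m i]
  · exact vv_lt_one m i

lemma P_ss_lt_ff (P : ℚ → ℝ) (hP : Function.Injective P) (m : ℕ) (i : Fin m) :
    P (ss P m i) < P (ff P m i) := by
  rw [ff, ss]; split_ifs with h
  · exact h
  · push_neg at h
    refine lt_of_le_of_ne h ?_
    intro hc
    exact uu_ne_vv m i i (hP hc)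

lemma ff_inj (P : ℚ → ℝ) (m : ℕ) {i j : Fin m} (h : ff P m i = ff P m j) : i = j := by
  rcases ff_cases P m i with h1 | h1 <;> rcases ff_cases P m j with h2 | h2 <;>
    rw [h1, h2] at h
  · exact uu_inj m h
  · exact absurd h (uu_ne_vv m i j)
  · exact absurd h.symm (uu_ne_vv m j i)
  · exact vv_inj m h

lemma ss_inj (P : ℚ → ℝ) (m : ℕ) {i j : Fin m} (h : ss P m i = ss P m j) : i = j := by
  rcases ss_cases P m i with h1 | h1 <;> rcases ss_cases P m j with h2 | h2 <;>
    rw [h1, h2] at h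
  · exact uu_inj m h
  · exact absurd h (uu_ne_vv m i j)
  · exact absurd h.symm (uu_ne_vv m j i)
  · exact vv_inj m h

lemma ffss (P : ℚ → ℝ) (m : ℕ) (i : Fin m) :
    (ff P m i = uu m i ∧ ss P m i = vv m i) ∨ (ff P m i = vv m i ∧ ss P m i = uu m i) := by
  rw [ff, ss]; split_ifs <;> simp

lemma ff_ne_ss (P : ℚ → ℝ) (m : ℕ) (i j : Fin m) : ff P m i ≠ ss P m j := by
  intro h
  rcases ffss P m i with ⟨hfi, hsi⟩ | ⟨hfi, hsi⟩ <;>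
    rcases ffss P m j with ⟨hfj, hsj⟩ | ⟨hfj, hsj⟩
  · rw [hfi, hsj] at h; exact uu_ne_vv m i j h
  · rw [hfi, hsj] at h
    have := uu_inj m h; subst this
    exact uu_ne_vv m i i (hfi.symm.trans hfj)
  · rw [hfi, hsj] at h
    have := vv_inj m h; subst this
    exact uu_ne_vv m i i (hfj.symm.trans hfi)
  · rw [hfi, hsj] at h; exact uu_ne_vv m j i h.symm

/-! ### The input list -/

noncomputable def allL (P : ℚ → ℝ) (m : ℕ) (σ : Fin m → Bool) : List ℚ :=
  ((List.finRange m).map (ff P m)) ++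
    (((List.finRange m).filter (fun j => σ j)).map (ss P m))

lemma mem_allL (P : ℚ → ℝ) (m : ℕ) (σ : Fin m → Bool) (x : ℚ) :
    x ∈ allL P m σ ↔ (∃ i, ff P m i = x) ∨ (∃ i, σ i = true ∧ ss P m i = x) := by
  simp [allL, List.mem_filter]

lemma nodup_allL (P : ℚ → ℝ) (m : ℕ) (σ : Fin m → Bool) : (allL P m σ).Nodup := by
  refine List.Nodup.append ?_ ?_ ?_
  · exact (List.nodup_finRange m).map (fun i j h => ff_inj P m h)
  · exact (((List.nodup_finRange m).filter _).map (fun i j h => ss_inj P m h))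
  · intro x hx hx'
    obtain ⟨i, _, rfl⟩ := List.mem_map.mp hx
    obtain ⟨j, _, hj⟩ := List.mem_map.mp hx'
    exact ff_ne_ss P m i j hj.symm

lemma length_allL (P : ℚ → ℝ) (m : ℕ) (σ : Fin m → Bool) : (allL P m σ).length ≤ 2 * m := by
  rw [allL, List.length_append, List.length_map, List.length_map, List.length_finRange]
  have := List.length_filter_le (fun j => σ j) (List.finRange m)
  rw [List.length_finRange] at this
  omega

noncomputable def LL (P : ℚ → ℝ) (m : ℕ) (σ : Fin m → Bool) : List ℚ :=
  @List.insertionSort ℚ (fun x y => P y ≤ P x) (Classical.decRel _) (allL P m σ)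

lemma perm_LL (P : ℚ → ℝ) (m : ℕ) (σ : Fin m → Bool) : (LL P m σ).Perm (allL P m σ) :=
  List.perm_insertionSort _ _

lemma mem_LL (P : ℚ → ℝ) (m : ℕ) (σ : Fin m → Bool) (x : ℚ) :
    x ∈ LL P m σ ↔ (∃ i, ff P m i = x) ∨ (∃ i, σ i = true ∧ ss P m i = x) := by
  rw [(perm_LL P m σ).mem_iff]; exact mem_allL P m σ x

lemma nodup_LL (P : ℚ → ℝ) (m : ℕ) (σ : Fin m → Bool) : (LL P m σ).Nodup :=
  ((perm_LL P m σ).nodup_iff).mpr (nodup_allL P m σ)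

lemma sorted_LL (P : ℚ → ℝ) (m : ℕ) (σ : Fin m → Bool) :
    List.Pairwise (fun x y => P y ≤ P x) (LL P m σ) := by
  haveI : Std.Total (fun x y => P y ≤ P x) := ⟨fun a b => le_total (P b) (P a)⟩
  haveI : IsTrans ℚ (fun x y => P y ≤ P x) := ⟨fun a b c h1 h2 => le_trans h2 h1⟩
  exact List.pairwise_insertionSort _ _

lemma pairwise_LL (P : ℚ → ℝ) (hP : Function.Injective P) (m : ℕ) (σ : Fin m → Bool) :
    (LL P m σ).Pairwise (fun x y => P y < P x) := by
  have h1 := sorted_LL P m σ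
  have h2 : (LL P m σ).Pairwise (fun x y => x ≠ y) := nodup_LL P m σ
  exact (List.Pairwise.and h1 h2).imp
    (fun {x y} h => lt_of_le_of_ne h.1 (fun c => h.2 (hP c).symm))

/-! ### Prefixes of sorted lists -/

lemma mem_take_sorted (P : ℚ → ℝ) {L : List ℚ} (hs : L.Pairwise (fun x y => P y < P x))
    {p : ℕ} (hp : p < L.length) {y : ℚ} :
    y ∈ L.take p ↔ y ∈ L ∧ P (L.get ⟨p, hp⟩) < P y := by
  rw [List.pairwise_iff_getElem] at hs
  simp only [List.get_eq_getElem]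
  constructor
  · intro hy
    obtain ⟨k, hk, hky⟩ := List.mem_iff_getElem.mp hy
    have hk2 : k < p := by
      have := List.length_take (i := p) (l := L)
      omega
    have hkL : k < L.length := by omega
    have hky' : L[k] = y := (List.getElem_take (h := hk)).symm.trans hky
    refine ⟨(List.take_sublist p L).mem hy, ?_⟩
    have := hs k p hkL hp hk2
    rw [← hky']
    exact this
  · rintro ⟨hyL, hlt⟩
    obtain ⟨k, hk, hky⟩ := List.mem_iff_getElem.mp hyL
    have hkp : k < p := by
      by_contra hc
      push_neg at hc
      rcases eq_or_lt_of_le hc with h | h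
      · subst h
        rw [hky] at hlt
        exact lt_irrefl _ hlt
      · have h2 := hs p k hp hk h
        rw [hky] at h2
        exact lt_asymm h2 hlt
    have hk3 : k < (L.take p).length := by
      rw [List.length_take]; omega
    have : (L.take p)[k] = y := by rw [List.getElem_take]; exact hky
    rw [← this]
    exact List.getElem_mem hk3

/-! ### Position of `ff i` in the list -/

lemma ff_mem_LL (P : ℚ → ℝ) (m : ℕ) (σ : Fin m → Bool) (i : Fin m) :
    ff P m i ∈ LL P m σ := (mem_LL P m σ _).mpr (Or.inl ⟨i, rfl⟩)

noncomputable def posn (P : ℚ → ℝ) (m : ℕ) (σ : Fin m → Bool) (i : Fin m) : ℕ :=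
  (LL P m σ).idxOf (ff P m i)

lemma posn_lt (P : ℚ → ℝ) (m : ℕ) (σ : Fin m → Bool) (i : Fin m) :
    posn P m σ i < (LL P m σ).length :=
  List.idxOf_lt_length_iff.mpr (ff_mem_LL P m σ i)

lemma get_posn (P : ℚ → ℝ) (m : ℕ) (σ : Fin m → Bool) (i : Fin m) :
    (LL P m σ).get ⟨posn P m σ i, posn_lt P m σ i⟩ = ff P m i :=
  List.idxOf_get (posn_lt P m σ i)

lemma prefix_eq (P : ℚ → ℝ) (hP : Function.Injective P) (m : ℕ) {σ σ' : Fin m → Bool}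
    (i : Fin m) (hag : ∀ j, P (ff P m i) < P (ff P m j) → σ j = σ' j) :
    (LL P m σ).take (posn P m σ i) = (LL P m σ').take (posn P m σ' i) := by
  haveI : IsAntisymm ℚ (fun x y => P y < P x) := ⟨fun a b h1 h2 => (lt_asymm h1 h2).elim⟩
  have key : ∀ (τ τ' : Fin m → Bool), (∀ j, P (ff P m i) < P (ff P m j) → τ j = τ' j) →
      ∀ y, y ∈ (LL P m τ).take (posn P m τ i) → y ∈ (LL P m τ').take (posn P m τ' i) := by
    intro τ τ' hag2 y hy
    rw [mem_take_sorted P (pairwise_LL P hP m τ) (posn_lt P m τ i)] at hy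
    rw [mem_take_sorted P (pairwise_LL P hP m τ') (posn_lt P m τ' i)]
    rw [get_posn P m τ i] at hy
    rw [get_posn P m τ' i]
    obtain ⟨hyL, hlt⟩ := hy
    refine ⟨?_, hlt⟩
    rw [mem_LL] at hyL ⊢
    rcases hyL with ⟨j, rfl⟩ | ⟨j, hσj, rfl⟩
    · exact Or.inl ⟨j, rfl⟩
    · have hj : P (ff P m i) < P (ff P m j) := hlt.trans (P_ss_lt_ff P hP m j)
      exact Or.inr ⟨j, (hag2 j hj) ▸ hσj, rfl⟩
  refine (fun hp h1 h2 => List.Perm.eq_of_pairwise (le := fun x y => P y < P x)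
    (fun a b _ _ h1 h2 => (lt_asymm h1 h2).elim) h1 h2 hp) ?_ ?_ ?_
  · rw [List.perm_ext_iff_of_nodup
      ((List.take_sublist _ _).nodup (nodup_LL P m σ))
      ((List.take_sublist _ _).nodup (nodup_LL P m σ'))]
    intro y
    exact ⟨key σ σ' hag y, key σ' σ (fun j hj => (hag j hj).symm) y⟩
  · exact List.Pairwise.sublist (List.take_sublist _ _) (pairwise_LL P hP m σ)
  · exact List.Pairwise.sublist (List.take_sublist _ _) (pairwise_LL P hP m σ')

/-! ### Correct answers at the `ff` positions -/

lemma pmCorrect_posn (P : ℚ → ℝ) (hP : Function.Injective P) (m : ℕ) (σ : Fin m → Bool)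
    (i : Fin m) :
    pmCorrect (LL P m σ) ⟨posn P m σ i, posn_lt P m σ i⟩ = σ i := by
  rw [pmCorrect]
  cases hσ : σ i
  · simp only [decide_eq_false_iff_not]
    rintro ⟨j, hj, hsum⟩
    rw [get_posn P m σ i] at hsum
    have hy : (LL P m σ).get j = ss P m i := by
      have := ss_eq P m i; linarith
    have hmem : ss P m i ∈ LL P m σ := hy ▸ (List.get_mem (LL P m σ) j)
    rw [mem_LL] at hmem
    rcases hmem with ⟨k, hk⟩ | ⟨k, hσk, hk⟩
    · exact ff_ne_ss P m k i hk
    · have := ss_inj P m hk; subst this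
      rw [hσk] at hσ; exact absurd hσ (by simp)
  · simp only [decide_eq_true_eq]
    have hmem : ss P m i ∈ LL P m σ := (mem_LL P m σ _).mpr (Or.inr ⟨i, hσ, rfl⟩)
    obtain ⟨q, hq⟩ := List.mem_iff_get.mp hmem
    refine ⟨q, ?_, ?_⟩
    · intro hc
      rw [hc, get_posn P m σ i] at hq
      exact ff_ne_ss P m i i hq
    · rw [get_posn P m σ i, hq]
      exact ff_add_ss P m i

/-! ### The algorithm's answers and the error pattern -/

noncomputable def gg (P : ℚ → ℝ) (Dc : List ℚ → ℚ → Bool) (m : ℕ) (σ : Fin m → Bool)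
    (i : Fin m) : Bool :=
  Dc ((LL P m σ).take (posn P m σ i)) (ff P m i)

noncomputable def ee (P : ℚ → ℝ) (Dc : List ℚ → ℚ → Bool) (m : ℕ) (σ : Fin m → Bool) :
    Fin m → Bool :=
  fun i => xor (σ i) (gg P Dc m σ i)

lemma ee_inj (P : ℚ → ℝ) (hP : Function.Injective P) (Dc : List ℚ → ℚ → Bool) (m : ℕ) :
    Function.Injective (ee P Dc m) := by
  classical
  intro σ σ' h
  have key : ∀ n : ℕ, ∀ i : Fin m,
      (Finset.univ.filter (fun j => P (ff P m i) < P (ff P m j))).card = n → σ i = σ' i := by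
    intro n
    induction n using Nat.strong_induction_on with
    | _ n IH =>
      intro i hn
      have hag : ∀ j, P (ff P m i) < P (ff P m j) → σ j = σ' j := by
        intro j hj
        refine IH _ ?_ j rfl
        rw [← hn]
        apply Finset.card_lt_card
        rw [Finset.ssubset_iff_of_subset]
        · exact ⟨j, Finset.mem_filter.mpr ⟨Finset.mem_univ _, hj⟩,
            fun hc => lt_irrefl _ (Finset.mem_filter.mp hc).2⟩
        · intro k hk
          rw [Finset.mem_filter] at hk ⊢
          exact ⟨hk.1, hj.trans hk.2⟩
      have hgg : gg P Dc m σ i = gg P Dc m σ' i := by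
        rw [gg, gg, prefix_eq P hP m i hag]
      have hei := congrFun h i
      simp only [ee] at hei
      rw [hgg] at hei
      cases hb : gg P Dc m σ' i <;> rw [hb] at hei <;> simpa using hei
  funext i
  exact key _ i rfl

/-- The weight (number of `true`s) of a Boolean pattern. -/
def wt {m : ℕ} (e : Fin m → Bool) : ℕ := (Finset.univ.filter (fun i => e i = true)).card

lemma wt_le (m : ℕ) (e : Fin m → Bool) : wt e ≤ m := by
  have := Finset.card_filter_le (Finset.univ : Finset (Fin m)) (fun i => e i = true)
  simpa [wt] using this

lemma wt_le_mistakes (P : ℚ → ℝ) (hP : Function.Injective P) (Dc : List ℚ → ℚ → Bool)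
    (m : ℕ) (σ : Fin m → Bool) :
    wt (ee P Dc m σ) ≤
      (Finset.univ.filter (fun p : Fin (LL P m σ).length =>
        Dc ((LL P m σ).take (p : ℕ)) ((LL P m σ).get p) ≠ pmCorrect (LL P m σ) p)).card := by
  apply Finset.card_le_card_of_injOn
    (fun i => (⟨posn P m σ i, posn_lt P m σ i⟩ : Fin (LL P m σ).length))
  · intro i hi
    rw [Finset.mem_coe, Finset.mem_filter] at hi ⊢
    refine ⟨Finset.mem_univ _, ?_⟩
    have hxor : xor (σ i) (gg P Dc m σ i) = true := hi.2
    simp only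
    rw [pmCorrect_posn P hP m σ i, get_posn P m σ i]
    show Dc ((LL P m σ).take (posn P m σ i)) (ff P m i) ≠ σ i
    show gg P Dc m σ i ≠ σ i
    intro hc
    rw [hc] at hxor
    simp at hxor
  · intro i _ j _ hij
    have h1 : posn P m σ i = posn P m σ j := by
      simpa using congrArg Fin.val hij
    have h2 : (⟨posn P m σ i, posn_lt P m σ i⟩ : Fin (LL P m σ).length) =
        ⟨posn P m σ j, posn_lt P m σ j⟩ := Fin.ext h1
    have h3 : ff P m i = ff P m j := by
      rw [← get_posn P m σ i, ← get_posn P m σ j, h2]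
    exact ff_inj P m h3

/-! ### The entropy counting bound -/

lemma sum_weights_eq_one (ε : ℝ) (hε1 : ε < 1) (m : ℕ) :
    ∑ e : Fin m → Bool, ε ^ wt e * (1 - ε) ^ (m - wt e) = 1 := by
  classical
  have h1 : ∀ e : Fin m → Bool,
      (∏ i : Fin m, (if e i = true then ε else 1 - ε)) = ε ^ wt e * (1 - ε) ^ (m - wt e) := by
    intro e
    rw [← Finset.prod_filter_mul_prod_filter_not Finset.univ (fun i => e i = true)]
    congr 1
    · rw [Finset.prod_congr rfl (fun i hi => if_pos (Finset.mem_filter.mp hi).2),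
        Finset.prod_const]
      rfl
    · rw [Finset.prod_congr rfl (fun i hi => if_neg (Finset.mem_filter.mp hi).2),
        Finset.prod_const]
      congr 1
      have := Finset.card_filter_add_card_filter_not
        (s := (Finset.univ : Finset (Fin m))) (p := fun i => e i = true)
      simp only [Finset.card_univ, Fintype.card_fin] at this
      rw [wt]
      omega
  calc ∑ e : Fin m → Bool, ε ^ wt e * (1 - ε) ^ (m - wt e)
      = ∑ e : Fin m → Bool, ∏ i : Fin m, (if e i = true then ε else 1 - ε) := by
        exact (Finset.sum_congr rfl (fun e _ => (h1 e))).symm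
    _ = ∏ i : Fin m, ∑ b : Bool, (if b = true then ε else 1 - ε) := by
        rw [Finset.prod_univ_sum (fun _ => (Finset.univ : Finset Bool))
          (fun _ b => if b = true then ε else 1 - ε)]
        rw [Fintype.piFinset_univ]
    _ = ∏ _i : Fin m, 1 := by
        apply Finset.prod_congr rfl
        intro i _
        simp
    _ = 1 := Finset.prod_const_one

lemma term_ge (ε : ℝ) (hε0 : 0 < ε) (hε1 : ε ≤ 1 / 2) (m k : ℕ)
    (hk : (k : ℝ) ≤ ε * m) (hkm : k ≤ m) :
    (2 : ℝ) ^ (-(binEnt ε * m)) ≤ ε ^ k * (1 - ε) ^ (m - k) := by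
  have h1ε : (0:ℝ) < 1 - ε := by linarith
  set A := Real.logb 2 ε with hA
  set B := Real.logb 2 (1 - ε) with hB
  have hA2 : (2:ℝ) ^ A = ε := Real.rpow_logb (by norm_num) (by norm_num) hε0
  have hB2 : (2:ℝ) ^ B = 1 - ε := Real.rpow_logb (by norm_num) (by norm_num) h1ε
  have hAB : A ≤ B := Real.logb_le_logb_of_le (by norm_num) hε0 (by linarith)
  have hcast : ((m - k : ℕ) : ℝ) = (m : ℝ) - (k : ℝ) := by
    rw [Nat.cast_sub hkm]
  have hek : ε ^ k = (2:ℝ) ^ (A * (k:ℝ)) := by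
    rw [Real.rpow_mul (by norm_num), hA2, Real.rpow_natCast]
  have hbk : (1 - ε) ^ (m - k) = (2:ℝ) ^ (B * ((m:ℝ) - (k:ℝ))) := by
    rw [Real.rpow_mul (by norm_num), hB2, ← hcast, Real.rpow_natCast]
  rw [hek, hbk, ← Real.rpow_add (by norm_num)]
  rw [Real.rpow_le_rpow_left_iff (by norm_num : (1:ℝ) < 2)]
  rw [binEnt, ← hA, ← hB]
  have hkm' : (k : ℝ) ≤ (m : ℝ) := Nat.cast_le.mpr hkm
  nlinarith [mul_nonneg (sub_nonneg.mpr hAB) (sub_nonneg.mpr hk)]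

lemma badcard (ε : ℝ) (hε0 : 0 < ε) (hε1 : ε ≤ 1 / 2) (m : ℕ)
    (S : Finset (Fin m → Bool)) (hS : ∀ e ∈ S, (wt e : ℝ) < ε * m) :
    (S.card : ℝ) ≤ (2 : ℝ) ^ (binEnt ε * m) := by
  have h1ε : ε < 1 := by linarith
  have hc : (0:ℝ) < (2:ℝ) ^ (-(binEnt ε * m)) := Real.rpow_pos_of_pos (by norm_num) _
  have hsum : (S.card : ℝ) * (2:ℝ) ^ (-(binEnt ε * m)) ≤ 1 := by
    calc (S.card : ℝ) * (2:ℝ) ^ (-(binEnt ε * m))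
        = ∑ _e ∈ S, (2:ℝ) ^ (-(binEnt ε * m)) := by rw [Finset.sum_const, nsmul_eq_mul]
      _ ≤ ∑ e ∈ S, ε ^ wt e * (1 - ε) ^ (m - wt e) := by
          apply Finset.sum_le_sum
          intro e he
          exact term_ge ε hε0 hε1 m (wt e) (le_of_lt (hS e he)) (wt_le m e)
      _ ≤ ∑ e : Fin m → Bool, ε ^ wt e * (1 - ε) ^ (m - wt e) := by
          apply Finset.sum_le_sum_of_subset_of_nonneg (Finset.subset_univ S)
          intro e _ _
          have : (0:ℝ) ≤ ε := le_of_lt hε0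
          have : (0:ℝ) ≤ 1 - ε := by linarith
          positivity
      _ = 1 := sum_weights_eq_one ε h1ε m
  have hpos : (0:ℝ) < (2:ℝ) ^ (binEnt ε * m) := Real.rpow_pos_of_pos (by norm_num) _
  rw [← div_le_one hpos, div_eq_mul_inv, ← Real.rpow_neg (by norm_num : (0:ℝ) ≤ 2)]
  exact hsum

end PMAux

theorem pm_priority_advice_lower_bound
    (P : ℚ → ℝ) (hP : Function.Injective P)
    (ε : ℝ) (hε0 : 0 < ε) (hε1 : ε ≤ 1 / 2) (b : ℕ)
    (D : Fin (2 ^ b) → List ℚ → ℚ → Bool) :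
    ∃ M : ℕ, ∀ m : ℕ, M ≤ m →
      (b : ℝ) < (1 - binEnt ε) * (m : ℝ) →
      ∃ l : List ℚ,
        l.Nodup ∧ (∀ x ∈ l, 0 ≤ x ∧ x ≤ 1) ∧ l.length ≤ 2 * m ∧
        l.Pairwise (fun u v => P v < P u) ∧
        ∀ a : Fin (2 ^ b),
          ε * (m : ℝ) ≤
            ((Finset.univ.filter (fun i : Fin l.length =>
              D a (l.take (i : ℕ)) (l.get i) ≠ pmCorrect l i)).card : ℝ) := by
  refine ⟨0, ?_⟩
  intro m _ hbm
  have main : ∃ σ : Fin m → Bool, ∀ a : Fin (2 ^ b),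
      ε * (m : ℝ) ≤ ((Finset.univ.filter (fun i : Fin (PMAux.LL P m σ).length =>
        D a ((PMAux.LL P m σ).take (i : ℕ)) ((PMAux.LL P m σ).get i) ≠
          pmCorrect (PMAux.LL P m σ) i)).card : ℝ) := by
    by_contra hcon
    push_neg at hcon
    classical
    set Bad : Finset (Fin m → Bool) :=
      Finset.univ.filter (fun e => (PMAux.wt e : ℝ) < ε * m) with hBadDef
    have hBadCard : (Bad.card : ℝ) ≤ (2:ℝ) ^ (binEnt ε * m) := by
      apply PMAux.badcard ε hε0 hε1 m
      intro e he
      exact (Finset.mem_filter.mp he).2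
    have hcover : ∀ σ : Fin m → Bool, ∃ a : Fin (2^b), PMAux.ee P (D a) m σ ∈ Bad := by
      intro σ
      obtain ⟨a, ha⟩ := hcon σ
      refine ⟨a, Finset.mem_filter.mpr ⟨Finset.mem_univ _, ?_⟩⟩
      have hle := PMAux.wt_le_mistakes P hP (D a) m σ
      calc (PMAux.wt (PMAux.ee P (D a) m σ) : ℝ) ≤ _ := Nat.cast_le.mpr hle
        _ < ε * m := ha
    have h1 : (2:ℕ) ^ m ≤ ∑ a : Fin (2^b),
        (Finset.univ.filter (fun σ : Fin m → Bool => PMAux.ee P (D a) m σ ∈ Bad)).card := by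
      have hsub : (Finset.univ : Finset (Fin m → Bool)) ⊆
          Finset.univ.biUnion (fun a : Fin (2^b) =>
            Finset.univ.filter (fun σ => PMAux.ee P (D a) m σ ∈ Bad)) := by
        intro σ _
        obtain ⟨a, ha⟩ := hcover σ
        exact Finset.mem_biUnion.mpr ⟨a, Finset.mem_univ _,
          Finset.mem_filter.mpr ⟨Finset.mem_univ _, ha⟩⟩
      calc (2:ℕ)^m = Fintype.card (Fin m → Bool) := by
            rw [Fintype.card_fun]; simp
        _ = (Finset.univ : Finset (Fin m → Bool)).card := (Finset.card_univ).symm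
        _ ≤ _ := Finset.card_le_card hsub
        _ ≤ _ := Finset.card_biUnion_le
    have h2 : ∀ a : Fin (2^b),
        (Finset.univ.filter
          (fun σ : Fin m → Bool => PMAux.ee P (D a) m σ ∈ Bad)).card ≤ Bad.card := by
      intro a
      apply Finset.card_le_card_of_injOn (PMAux.ee P (D a) m)
      · intro σ hσ; exact (Finset.mem_filter.mp hσ).2
      · exact (PMAux.ee_inj P hP (D a) m).injOn
    have h3 : (2:ℕ)^m ≤ 2^b * Bad.card := by
      calc (2:ℕ)^m ≤ _ := h1
        _ ≤ ∑ _a : Fin (2^b), Bad.card := Finset.sum_le_sum (fun a _ => h2 a)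
        _ = 2^b * Bad.card := by
          rw [Finset.sum_const, Finset.card_univ, Fintype.card_fin, smul_eq_mul]
    have h4 : ((2:ℝ))^(m:ℕ) ≤ (2:ℝ)^(b:ℕ) * (2:ℝ)^(binEnt ε * m) := by
      have hcast := Nat.cast_le (α := ℝ) |>.mpr h3
      push_cast at hcast
      calc ((2:ℝ))^m ≤ ((2:ℝ)^b) * (Bad.card : ℝ) := hcast
        _ ≤ (2:ℝ)^b * (2:ℝ)^(binEnt ε * m) :=
            mul_le_mul_of_nonneg_left hBadCard (by positivity)
    have h5 : (2:ℝ)^(b:ℕ) * (2:ℝ)^(binEnt ε * m) < (2:ℝ)^(m:ℕ) := by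
      have hb2 : (2:ℝ)^((b:ℕ):ℝ) < (2:ℝ)^((1 - binEnt ε) * (m:ℝ)) :=
        (Real.rpow_lt_rpow_left_iff (by norm_num : (1:ℝ) < 2)).mpr hbm
      have e1 : ((2:ℝ))^(b:ℕ) = (2:ℝ)^((b:ℕ):ℝ) := (Real.rpow_natCast 2 b).symm
      have e2 : ((2:ℝ))^(m:ℕ) = (2:ℝ)^((m:ℕ):ℝ) := (Real.rpow_natCast 2 m).symm
      rw [e1, e2]
      calc (2:ℝ)^((b:ℕ):ℝ) * (2:ℝ)^(binEnt ε * m)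
          < (2:ℝ)^((1 - binEnt ε) * (m:ℝ)) * (2:ℝ)^(binEnt ε * m) :=
            mul_lt_mul_of_pos_right hb2 (Real.rpow_pos_of_pos (by norm_num) _)
        _ = (2:ℝ)^((1 - binEnt ε) * (m:ℝ) + binEnt ε * m) :=
            (Real.rpow_add (by norm_num) _ _).symm
        _ = (2:ℝ)^((m:ℕ):ℝ) := by congr 1; ring
    linarith
  obtain ⟨σ, hσ⟩ := main
  refine ⟨PMAux.LL P m σ, PMAux.nodup_LL P m σ, ?_, ?_, PMAux.pairwise_LL P hP m σ, hσ⟩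
  · intro x hx
    rw [PMAux.mem_LL] at hx
    rcases hx with ⟨i, rfl⟩ | ⟨i, _, rfl⟩
    · exact ⟨le_of_lt (PMAux.ff_pos P m i), le_of_lt (PMAux.ff_lt_one P m i)⟩
    · rw [PMAux.ss_eq]
      constructor <;> nlinarith [PMAux.ff_pos P m i, PMAux.ff_lt_one P m i]
  · rw [(PMAux.perm_LL P m σ).length_eq]
    exact PMAux.length_allL P m σ
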